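/- Let T > 0, K₀ > 0, λ > 0, and let ψ, P : ℝ → ℝ be continuously differentiable T-periodic functions, P > 0, ⟨ψ⟩ = 1, satisfying P'(t) + (λ + K₀ψ(t))P(t) = 2K₀ψ(t-T)P(t-T)e^{-λT} for all t. Then (1/T)∫₀^T ψ(t)·P'(t)/P(t) dt = λ·(⟨ψ²⟩ - 1), where ⟨ψ²⟩ = (1/T)∫₀^T ψ(t)² dt. -/

import Mathlib

theorem stmt_9 (T K₀ lam : ℝ) (hT : 0 < T) (hK : 0 < K₀) (hlam : 0 < lam)
    (ψ P P' : ℝ → ℝ)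
    (hψ : Continuous ψ) (hψper : Function.Periodic ψ T)
    (hψavg : (1 / T) * ∫ t in (0 : ℝ)..T, ψ t = 1)
    (hP : ∀ t, HasDerivAt P (P' t) t) (hP' : Continuous P')
    (hPper : Function.Periodic P T) (hPpos : ∀ t, 0 < P t)
    (hdde : ∀ t, P' t + (lam + K₀ * ψ t) * P t
      = 2 * K₀ * ψ (t - T) * P (t - T) * Real.exp (-lam * T)) :
    (1 / T) * ∫ t in (0 : ℝ)..T, ψ t * P' t / P t
      = lam * ((1 / T) * (∫ t in (0 : ℝ)..T, (ψ t) ^ 2) - 1) := by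
  have hPcont : Continuous P := by
    rw [continuous_iff_continuousAt]
    exact fun t => (hP t).differentiableAt.continuousAt
  set c : ℝ := 2 * K₀ * Real.exp (-lam * T) - K₀ with hc
  have key : ∀ t, P' t / P t = c * ψ t - lam := by
    intro t
    have h := hdde t
    rw [hψper.sub_eq, hPper.sub_eq] at h
    have hne := (hPpos t).ne'
    rw [div_eq_iff hne, hc]
    linear_combination h
  have hψint : ∫ t in (0:ℝ)..T, ψ t = T := by
    have := hψavg
    field_simp at this
    linarith [this]
  have hlog : ∫ t in (0:ℝ)..T, P' t / P t = Real.log (P T) - Real.log (P 0) := by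
    apply intervalIntegral.integral_eq_sub_of_hasDerivAt
    · exact fun t _ => (hP t).log (hPpos t).ne'
    · exact (hP'.div hPcont fun t => (hPpos t).ne').intervalIntegrable 0 T
  have hPT : P T = P 0 := by simpa using hPper 0
  have hzero : ∫ t in (0:ℝ)..T, P' t / P t = 0 := by
    rw [hlog, hPT, sub_self]
  have hint2 : ∫ t in (0:ℝ)..T, (c * ψ t - lam) = c * T - lam * T := by
    rw [intervalIntegral.integral_sub (((by fun_prop : Continuous fun t => c * ψ t)).intervalIntegrable 0 T)
      (intervalIntegrable_const), intervalIntegral.integral_const_mul, hψint,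
      intervalIntegral.integral_const]
    simp [smul_eq_mul]
    ring
  have hceq : c = lam := by
    have : ∫ t in (0:ℝ)..T, P' t / P t = ∫ t in (0:ℝ)..T, (c * ψ t - lam) := by
      apply intervalIntegral.integral_congr
      intro t _
      exact key t
    rw [hzero, hint2] at this
    have := this.symm
    nlinarith
  have hmain : ∫ t in (0:ℝ)..T, ψ t * P' t / P t
      = lam * (∫ t in (0:ℝ)..T, (ψ t) ^ 2) - lam * T := by
    have heq : ∫ t in (0:ℝ)..T, ψ t * P' t / P t
        = ∫ t in (0:ℝ)..T, (lam * (ψ t)^2 - lam * ψ t) := by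
      apply intervalIntegral.integral_congr
      intro t _
      show ψ t * P' t / P t = lam * (ψ t)^2 - lam * ψ t
      rw [mul_div_assoc, key t, hceq]
      ring
    rw [heq, intervalIntegral.integral_sub
      ((by fun_prop : Continuous fun t => lam * (ψ t)^2).intervalIntegrable 0 T)
      ((by fun_prop : Continuous fun t => lam * ψ t).intervalIntegrable 0 T),
      intervalIntegral.integral_const_mul, intervalIntegral.integral_const_mul, hψint]
  rw [hmain]
  field_simp
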